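/- Suppose f : ℝ → ℝ satisfies |f^{(m)}(a)| ≤ K^m (m!)^κ for all m ∈ ℕ, where K > 0 and κ ∈ [0, 1/2). Then for every t ≥ 0 the series Σ_{k even, k ≥ 2} |f^{(k)}(a)| t^{Hk} / (2^{k/2} (k/2)!) converges, where H ∈ (0,1). -/

import Mathlib

open Real Filter Topology

lemma fact_two_mul_le_aux (m : ℕ) :
    (2 * m).factorial ≤ 4 ^ m * m.factorial ^ 2 := by
  induction m with
  | zero => simp
  | succ n ih =>
    have h : 2 * (n + 1) = (2 * n + 1) + 1 := by ring
    rw [h, Nat.factorial_succ]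
    calc (2 * n + 1 + 1) * (2 * n + 1).factorial
        = (2 * n + 2) * ((2 * n + 1) * (2 * n).factorial) := by
          rw [Nat.factorial_succ]
      _ ≤ (2 * n + 2) * ((2 * n + 2) * (4 ^ n * n.factorial ^ 2)) := by
          gcongr <;> omega
      _ = 4 ^ (n + 1) * ((n + 1).factorial) ^ 2 := by
          rw [Nat.factorial_succ]; ring

/-- If `|f^{(m)}(a)| ≤ K^m (m!)^κ` for all `m ∈ ℕ`, with `K > 0` and `κ ∈ [0,1/2)`, then for
every `t ≥ 0` the series `∑_{k even, k ≥ 2} |f^{(k)}(a)| t^{Hk} / (2^{k/2} (k/2)!)` converges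
(here `H ∈ (0,1)`; the even indices `k ≥ 2` are parametrized as `k = 2(j+1)`, `j ∈ ℕ`). -/
theorem series_summable (f : ℝ → ℝ) (a K κ H : ℝ) (hK : 0 < K)
    (hκ : κ ∈ Set.Ico (0 : ℝ) (1 / 2)) (hH : H ∈ Set.Ioo (0 : ℝ) 1)
    (hf : ∀ m : ℕ, |iteratedDeriv m f a| ≤ K ^ m * (Nat.factorial m : ℝ) ^ κ)
    (t : ℝ) (ht : 0 ≤ t) :
    Summable (fun j : ℕ =>
      |iteratedDeriv (2 * (j + 1)) f a| * t ^ (H * (2 * ((j : ℝ) + 1)))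
        / (2 ^ (j + 1) * (Nat.factorial (j + 1) : ℝ))) := by
  obtain ⟨hκ0, hκ2⟩ := hκ
  obtain ⟨hH0, hH1⟩ := hH
  have hT0 : (0:ℝ) ≤ t ^ (2 * H) := Real.rpow_nonneg ht _
  set C : ℝ := K ^ 2 * (4:ℝ) ^ κ * t ^ (2 * H) / 2 with hC
  have hC0 : 0 ≤ C := by positivity
  -- summability of the dominating series
  have hg : Summable (fun j : ℕ =>
      C ^ (j + 1) * ((Nat.factorial (j + 1) : ℝ)) ^ (2 * κ - 1)) := by
    apply summable_of_ratio_norm_eventually_le (r := 1/2) (by norm_num)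
    have hten : Tendsto (fun n : ℕ => C * ((n:ℝ) + 2) ^ (2 * κ - 1)) atTop (𝓝 (C * 0)) := by
      apply Tendsto.const_mul
      have h1 : Tendsto (fun n : ℕ => ((n:ℝ) + 2)) atTop atTop :=
        tendsto_atTop_add_const_right _ _ tendsto_natCast_atTop_atTop
      have h2 : Tendsto (fun x : ℝ => x ^ (2 * κ - 1)) atTop (𝓝 0) := by
        have := tendsto_rpow_neg_atTop (y := 1 - 2 * κ) (by linarith)
        simpa [neg_sub] using this
      exact h2.comp h1
    rw [mul_zero] at hten
    filter_upwards [hten.eventually_le_const (by norm_num : (0:ℝ) < 1/2)] with n hn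
    have hfac1 : (0:ℝ) < (Nat.factorial (n + 1) : ℝ) := by
      exact_mod_cast Nat.factorial_pos _
    have key : C ^ (n + 1 + 1) * ((Nat.factorial (n + 1 + 1) : ℝ)) ^ (2 * κ - 1)
        = (C * ((n:ℝ) + 2) ^ (2 * κ - 1)) *
          (C ^ (n + 1) * ((Nat.factorial (n + 1) : ℝ)) ^ (2 * κ - 1)) := by
      have hsucc : ((Nat.factorial (n + 2) : ℝ)) = ((n:ℝ) + 2) * (Nat.factorial (n + 1) : ℝ) := by
        rw [Nat.factorial_succ]; push_cast; ring
      rw [show n + 1 + 1 = n + 2 from rfl, hsucc,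
        Real.mul_rpow (by positivity) hfac1.le]
      ring
    rw [Real.norm_eq_abs, Real.norm_eq_abs, key,
      abs_of_nonneg (by positivity), abs_of_nonneg (by positivity)]
    gcongr
  apply hg.of_nonneg_of_le
  · intro j
    have := Real.rpow_nonneg ht (H * (2 * ((j:ℝ) + 1)))
    positivity
  · intro j
    set m := j + 1 with hm
    have hfacpos : (0:ℝ) < (Nat.factorial m : ℝ) := by exact_mod_cast Nat.factorial_pos _
    have hfac2pos : (0:ℝ) < (Nat.factorial (2 * m) : ℝ) := by exact_mod_cast Nat.factorial_pos _
    have hT : t ^ (H * (2 * ((j:ℝ) + 1))) = (t ^ (2 * H)) ^ m := by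
      rw [← Real.rpow_natCast (t ^ (2 * H)) m, ← Real.rpow_mul ht]
      congr 1
      push_cast [hm]
      ring
    have hd1 : ((Nat.factorial (2 * m) : ℝ)) ^ κ
        ≤ ((4:ℝ) ^ κ) ^ m * ((Nat.factorial m : ℝ)) ^ (2 * κ) := by
      have hle : ((Nat.factorial (2 * m) : ℝ)) ≤ 4 ^ m * ((Nat.factorial m : ℝ)) ^ 2 := by
        exact_mod_cast fact_two_mul_le_aux m
      calc ((Nat.factorial (2 * m) : ℝ)) ^ κ
          ≤ ((4:ℝ) ^ m * ((Nat.factorial m : ℝ)) ^ 2) ^ κ :=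
            Real.rpow_le_rpow hfac2pos.le hle hκ0
        _ = ((4:ℝ) ^ m) ^ κ * (((Nat.factorial m : ℝ)) ^ 2) ^ κ :=
            Real.mul_rpow (by positivity) (by positivity)
        _ = ((4:ℝ) ^ κ) ^ m * ((Nat.factorial m : ℝ)) ^ (2 * κ) := by
            rw [← Real.rpow_natCast (4:ℝ) m, ← Real.rpow_mul (by norm_num),
              mul_comm ((m:ℝ)) κ, Real.rpow_mul (by norm_num), Real.rpow_natCast,
              ← Real.rpow_natCast ((Nat.factorial m : ℝ)) 2, ← Real.rpow_mul hfacpos.le]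
            norm_num
    calc |iteratedDeriv (2 * m) f a| * t ^ (H * (2 * ((j:ℝ) + 1)))
          / (2 ^ m * (Nat.factorial m : ℝ))
        ≤ (K ^ (2 * m) * ((Nat.factorial (2 * m) : ℝ)) ^ κ) * (t ^ (2 * H)) ^ m
          / (2 ^ m * (Nat.factorial m : ℝ)) := by
          rw [hT]
          gcongr
          exact hf _
      _ ≤ (K ^ (2 * m) * (((4:ℝ) ^ κ) ^ m * ((Nat.factorial m : ℝ)) ^ (2 * κ)))
          * (t ^ (2 * H)) ^ m / (2 ^ m * (Nat.factorial m : ℝ)) := by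
          gcongr
      _ = C ^ m * ((Nat.factorial m : ℝ)) ^ (2 * κ - 1) := by
          rw [show ((Nat.factorial m : ℝ)) ^ (2 * κ - 1)
              = ((Nat.factorial m : ℝ)) ^ (2 * κ) / (Nat.factorial m : ℝ) by
            rw [Real.rpow_sub hfacpos, Real.rpow_one],
            hC, div_pow, mul_pow, mul_pow, ← pow_mul, mul_comm 2 m, pow_mul K m 2]
          field_simp
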